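/- For every s ∈ ℂ and every integer m ≥ 1, on (𝔳 × 𝔷) ∖ {(0,0)} one has ( (4s+2ρ−2)Δ₂ − (4m+p₂)Δ )( |X₂|^{2m} K_{s−m} ) = 8(s−m)(4s+2ρ−2)(2s+q−2m−1) |X₂|^{2m+2} K_{s−m−1} + 2m(2m+p₂−2)(4s+2ρ₁−4m−2) |X₂|^{2m−2} K_{s−m}. -/

import Mathlib

open scoped InnerProductSpace

noncomputable section

/-- The left-invariant vector field on `N = 𝔳 × 𝔷` associated to `S ∈ 𝔳`:
`(Sf)(X,Z) = ∂_𝔳 f(X,Z)[S] - ½ ∂_𝔷 f(X,Z)[[S,X]]`. -/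
def vfV {V W : Type*} [NormedAddCommGroup V] [InnerProductSpace ℝ V]
    [NormedAddCommGroup W] [InnerProductSpace ℝ W]
    (br : V →ₗ[ℝ] V →ₗ[ℝ] W) (S : V) (f : V × W → ℂ) : V × W → ℂ :=
  fun x => fderiv ℝ f x (S, 0) - (1/2 : ℂ) * fderiv ℝ f x (0, br S x.1)

/-- The left-invariant vector field associated to `T ∈ 𝔷`: `(Tf)(X,Z) = ∂_𝔷 f(X,Z)[T]`. -/
def vfW {V W : Type*} [NormedAddCommGroup V] [InnerProductSpace ℝ V]
    [NormedAddCommGroup W] [InnerProductSpace ℝ W]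
    (T : W) (f : V × W → ℂ) : V × W → ℂ :=
  fun x => fderiv ℝ f x (0, T)

/-- Sub-Laplacian `∑_{j ∈ fs} S_j²` associated to a family of vectors in `𝔳`. -/
def subLap {V W : Type*} [NormedAddCommGroup V] [InnerProductSpace ℝ V]
    [NormedAddCommGroup W] [InnerProductSpace ℝ W] {ι : Type*}
    (br : V →ₗ[ℝ] V →ₗ[ℝ] W) (fs : Finset ι) (S : ι → V) (f : V × W → ℂ) : V × W → ℂ :=
  fun x => ∑ j ∈ fs, vfV br (S j) (vfV br (S j) f) x

/-- Central Laplacian `∑_{j ∈ fs} T_j²` associated to a family of vectors in `𝔷`. -/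
def boxLap {V W : Type*} [NormedAddCommGroup V] [InnerProductSpace ℝ V]
    [NormedAddCommGroup W] [InnerProductSpace ℝ W] {ι : Type*}
    (fs : Finset ι) (T : ι → W) (f : V × W → ℂ) : V × W → ℂ :=
  fun x => ∑ j ∈ fs, vfW (T j) (vfW (T j) f) x

/-- The norm function `K(X,Z) = |X|⁴ + |Z|²`. -/
def Kfun {V W : Type*} [NormedAddCommGroup V] [NormedAddCommGroup W] (x : V × W) : ℝ :=
  ‖x.1‖^4 + ‖x.2‖^2

/-- The complex power `K_s = K^s`. -/
def Ks {V W : Type*} [NormedAddCommGroup V] [NormedAddCommGroup W] (s : ℂ) (x : V × W) : ℂ :=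
  (Kfun x : ℂ) ^ s

/-- `ρ = (p+2q)/2` as a complex number. -/
def rhoC (p q : ℕ) : ℂ := ((p : ℂ) + 2*q)/2

/-- `B(s) = 4s(4s+2ρ-2)`. -/
def Bc (p q : ℕ) (s : ℂ) : ℂ := 4*s*(4*s + 2*(rhoC p q) - 2)

/-- The component `X₂` of `X ∈ 𝔳` in `𝔳₂ = 𝔳₁ᗮ`. -/
def projPerp {V : Type*} [NormedAddCommGroup V] [InnerProductSpace ℝ V]
    [FiniteDimensional ℝ V] (V₁ : Submodule ℝ V) (X : V) : V :=
  (V₁ᗮ.orthogonalProjection X : V)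

/-- `ρ₁ = (p₁+2q)/2` as a complex number. -/
def rho1C (p₁ q : ℕ) : ℂ := ((p₁ : ℂ) + 2*q)/2

/-! ### Auxiliary calculus lemmas -/

section Aux

variable {V W : Type*} [NormedAddCommGroup V] [InnerProductSpace ℝ V]
  [NormedAddCommGroup W] [InnerProductSpace ℝ W]

theorem Kfun_pos {x : V × W} (hx : x ≠ 0) : 0 < Kfun x := by
  rcases eq_or_ne x.1 0 with h1 | h1
  · have h2 : x.2 ≠ 0 := by
      intro h2; exact hx (Prod.ext h1 h2)
    have : 0 < ‖x.2‖ := norm_pos_iff.mpr h2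
    have : 0 < ‖x.2‖^2 := by positivity
    have h4 : (0:ℝ) ≤ ‖x.1‖^4 := by positivity
    unfold Kfun; linarith
  · have : 0 < ‖x.1‖ := norm_pos_iff.mpr h1
    have : 0 < ‖x.1‖^4 := by positivity
    have h4 : (0:ℝ) ≤ ‖x.2‖^2 := by positivity
    unfold Kfun; linarith

theorem Kfun_eq : (Kfun : V × W → ℝ) = fun y => ⟪y.1, y.1⟫_ℝ * ⟪y.1, y.1⟫_ℝ + ⟪y.2, y.2⟫_ℝ := by
  funext y
  simp only [Kfun, real_inner_self_eq_norm_sq]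
  ring

theorem hasFDerivAt_Kfun (x : V × W) :
    ∃ D : (V × W) →L[ℝ] ℝ, HasFDerivAt (Kfun (V := V) (W := W)) D x ∧
      ∀ v w, D (v, w) = 2 * ⟪x.1, x.1⟫_ℝ * (2 * ⟪x.1, v⟫_ℝ) + 2 * ⟪x.2, w⟫_ℝ := by
  have h1 : HasFDerivAt (fun y : V × W => y.1) (ContinuousLinearMap.fst ℝ V W) x :=
    hasFDerivAt_fst
  have h2 : HasFDerivAt (fun y : V × W => y.2) (ContinuousLinearMap.snd ℝ V W) x :=
    hasFDerivAt_snd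
  have hn := h1.inner ℝ h1
  have hz := h2.inner ℝ h2
  have h := (hn.mul hn).add hz
  rw [Kfun_eq]
  refine ⟨_, h, ?_⟩
  intro v w
  simp [fderivInnerCLM_apply, real_inner_comm]
  ring

theorem hdcpow (τ : ℂ) {t : ℝ} (ht : 0 < t) :
    HasDerivAt (fun r : ℝ => ((r : ℂ)) ^ τ) (τ * (t : ℂ) ^ (τ - 1)) t := by
  have h := HasDerivAt.comp_ofReal (e := fun z : ℂ => z ^ τ)
    ((hasDerivAt_id ((t : ℝ) : ℂ)).cpow_const (c := τ)
      (by simpa using Complex.ofReal_mem_slitPlane.mpr ht))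
  simpa using h

theorem hdpow (m : ℕ) (t : ℝ) :
    HasDerivAt (fun r : ℝ => ((r : ℂ)) ^ m) ((m : ℂ) * (t : ℂ) ^ (m - 1)) t := by
  simpa using HasDerivAt.comp_ofReal (e := fun z : ℂ => z ^ m) (hasDerivAt_pow m ((t : ℝ) : ℂ))

theorem lemA (P : V →L[ℝ] V) (m : ℕ) (σ : ℂ) (x : V × W) (hx : 0 < Kfun x) :
    ∃ D : (V × W) →L[ℝ] ℂ,
      HasFDerivAt (fun y : V × W => ((⟪P y.1, P y.1⟫_ℝ : ℝ) : ℂ) ^ m * Ks σ y) D x ∧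
      ∀ v w, D (v, w) =
        ((2 * ⟪P x.1, P v⟫_ℝ : ℝ) : ℂ) * m * ((⟪P x.1, P x.1⟫_ℝ : ℝ) : ℂ) ^ (m - 1) * Ks σ x
        + ((2 * ⟪x.1, x.1⟫_ℝ * (2 * ⟪x.1, v⟫_ℝ) + 2 * ⟪x.2, w⟫_ℝ : ℝ) : ℂ) * σ * Ks (σ - 1) x
            * ((⟪P x.1, P x.1⟫_ℝ : ℝ) : ℂ) ^ m := by
  obtain ⟨DK, hDK, hDKval⟩ := hasFDerivAt_Kfun x
  have hP1 : HasFDerivAt (fun y : V × W => P y.1)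
      (P.comp (ContinuousLinearMap.fst ℝ V W)) x :=
    (P.hasFDerivAt).comp x hasFDerivAt_fst
  have hb : HasFDerivAt (fun y : V × W => ⟪P y.1, P y.1⟫_ℝ) _ x := hP1.inner ℝ hP1
  have hbm := ((hdpow m (⟪P x.1, P x.1⟫_ℝ)).hasFDerivAt).comp x hb
  have hKs := ((hdcpow σ hx).hasFDerivAt).comp x hDK
  have h := hbm.mul hKs
  refine ⟨_, h, ?_⟩
  intro v w
  simp [fderivInnerCLM_apply, real_inner_comm, hDKval, Ks, Complex.real_smul]
  ring

/-- The explicit first-derivative function of `u = b^m Ks σ`. -/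
def Efun (P : V →L[ℝ] V) (brc : V →L[ℝ] W) (m : ℕ) (σ : ℂ) (S : V) (y : V × W) : ℂ :=
  ((2 * ⟪P y.1, P S⟫_ℝ : ℝ) : ℂ) * m * ((⟪P y.1, P y.1⟫_ℝ : ℝ) : ℂ) ^ (m - 1) * Ks σ y
  + ((2 * ⟪y.1, y.1⟫_ℝ * (2 * ⟪y.1, S⟫_ℝ) - ⟪y.2, brc y.1⟫_ℝ : ℝ) : ℂ) * σ * Ks (σ - 1) y
      * ((⟪P y.1, P y.1⟫_ℝ : ℝ) : ℂ) ^ m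

theorem lemB (P : V →L[ℝ] V) (br : V →ₗ[ℝ] V →ₗ[ℝ] W) (brc : V →L[ℝ] W) (S : V)
    (hbrc : ∀ v, brc v = br S v) (m : ℕ) (σ : ℂ) (x : V × W) (hx : 0 < Kfun x) :
    vfV br S (fun y : V × W => ((⟪P y.1, P y.1⟫_ℝ : ℝ) : ℂ) ^ m * Ks σ y) x
      = Efun P brc m σ S x := by
  obtain ⟨D, hD, hDval⟩ := lemA P m σ x hx
  unfold vfV
  rw [hD.fderiv]
  rw [hDval, hDval]
  unfold Efun
  rw [hbrc]
  simp only [inner_zero_right, map_zero, inner_zero_left]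
  push_cast
  ring

theorem lemC (P : V →L[ℝ] V) (brc : V →L[ℝ] W) (S : V)
    (m : ℕ) (σ : ℂ) (x : V × W) (hx : 0 < Kfun x) :
    ∃ D : (V × W) →L[ℝ] ℂ,
      HasFDerivAt (Efun P brc m σ S) D x ∧
      ∀ v w, D (v, w) =
          ((2 * ⟪P v, P S⟫_ℝ : ℝ) : ℂ) * m * ((⟪P x.1, P x.1⟫_ℝ : ℝ) : ℂ) ^ (m - 1) * Ks σ x
        + ((2 * ⟪P x.1, P S⟫_ℝ : ℝ) : ℂ) * m *
            (((m - 1 : ℕ) : ℂ) * ((⟪P x.1, P x.1⟫_ℝ : ℝ) : ℂ) ^ (m - 1 - 1)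
              * ((2 * ⟪P x.1, P v⟫_ℝ : ℝ) : ℂ)) * Ks σ x
        + ((2 * ⟪P x.1, P S⟫_ℝ : ℝ) : ℂ) * m * ((⟪P x.1, P x.1⟫_ℝ : ℝ) : ℂ) ^ (m - 1)
            * (σ * Ks (σ - 1) x
              * ((2 * ⟪x.1, x.1⟫_ℝ * (2 * ⟪x.1, v⟫_ℝ) + 2 * ⟪x.2, w⟫_ℝ : ℝ) : ℂ))
        + ((2 * (2 * ⟪x.1, v⟫_ℝ) * (2 * ⟪x.1, S⟫_ℝ) + 2 * ⟪x.1, x.1⟫_ℝ * (2 * ⟪v, S⟫_ℝ)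
              - (⟪w, brc x.1⟫_ℝ + ⟪x.2, brc v⟫_ℝ) : ℝ) : ℂ) * σ * Ks (σ - 1) x
            * ((⟪P x.1, P x.1⟫_ℝ : ℝ) : ℂ) ^ m
        + ((2 * ⟪x.1, x.1⟫_ℝ * (2 * ⟪x.1, S⟫_ℝ) - ⟪x.2, brc x.1⟫_ℝ : ℝ) : ℂ) * σ
            * ((σ - 1) * Ks (σ - 2) x
              * ((2 * ⟪x.1, x.1⟫_ℝ * (2 * ⟪x.1, v⟫_ℝ) + 2 * ⟪x.2, w⟫_ℝ : ℝ) : ℂ))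
            * ((⟪P x.1, P x.1⟫_ℝ : ℝ) : ℂ) ^ m
        + ((2 * ⟪x.1, x.1⟫_ℝ * (2 * ⟪x.1, S⟫_ℝ) - ⟪x.2, brc x.1⟫_ℝ : ℝ) : ℂ) * σ
            * Ks (σ - 1) x
            * ((m : ℂ) * ((⟪P x.1, P x.1⟫_ℝ : ℝ) : ℂ) ^ (m - 1)
              * ((2 * ⟪P x.1, P v⟫_ℝ : ℝ) : ℂ)) := by
  obtain ⟨DK, hDK, hDKval⟩ := hasFDerivAt_Kfun x
  have h1 : HasFDerivAt (fun y : V × W => y.1) (ContinuousLinearMap.fst ℝ V W) x :=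
    hasFDerivAt_fst
  have h2 : HasFDerivAt (fun y : V × W => y.2) (ContinuousLinearMap.snd ℝ V W) x :=
    hasFDerivAt_snd
  have hP1 : HasFDerivAt (fun y : V × W => P y.1)
      (P.comp (ContinuousLinearMap.fst ℝ V W)) x :=
    (P.hasFDerivAt).comp x hasFDerivAt_fst
  have hbrc1 : HasFDerivAt (fun y : V × W => brc y.1)
      (brc.comp (ContinuousLinearMap.fst ℝ V W)) x :=
    (brc.hasFDerivAt).comp x hasFDerivAt_fst
  have hb : HasFDerivAt (fun y : V × W => ⟪P y.1, P y.1⟫_ℝ) _ x := hP1.inner ℝ hP1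
  have he1 : HasFDerivAt (fun y : V × W => ⟪P y.1, P S⟫_ℝ) _ x :=
    hP1.inner ℝ (hasFDerivAt_const (P S) x)
  have hnn : HasFDerivAt (fun y : V × W => ⟪y.1, y.1⟫_ℝ) _ x := h1.inner ℝ h1
  have haS : HasFDerivAt (fun y : V × W => ⟪y.1, S⟫_ℝ) _ x :=
    h1.inner ℝ (hasFDerivAt_const S x)
  have hwS : HasFDerivAt (fun y : V × W => ⟪y.2, brc y.1⟫_ℝ) _ x := h2.inner ℝ hbrc1
  have hbm := ((hdpow m (⟪P x.1, P x.1⟫_ℝ)).hasFDerivAt).comp x hb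
  have hbm1 := ((hdpow (m-1) (⟪P x.1, P x.1⟫_ℝ)).hasFDerivAt).comp x hb
  have hKs1 := ((hdcpow σ hx).hasFDerivAt).comp x hDK
  have hKs2 := ((hdcpow (σ-1) hx).hasFDerivAt).comp x hDK
  have hterm1 :=
    ((Complex.ofRealCLM.hasFDerivAt.comp x (he1.const_mul (2:ℝ))).mul_const (m:ℂ)).mul hbm1
      |>.mul hKs1
  have hre2 : HasFDerivAt
      (fun y : V × W => 2 * ⟪y.1, y.1⟫_ℝ * (2 * ⟪y.1, S⟫_ℝ) - ⟪y.2, brc y.1⟫_ℝ) _ x :=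
    ((hnn.const_mul (2:ℝ)).mul (haS.const_mul (2:ℝ))).sub hwS
  have hterm2 :=
    ((Complex.ofRealCLM.hasFDerivAt.comp x hre2).mul_const σ).mul hKs2 |>.mul hbm
  have h := hterm1.add hterm2
  refine ⟨_, h, ?_⟩
  intro v w
  have hK2 : (σ - 1 - 1) = σ - 2 := by ring
  simp [fderivInnerCLM_apply, real_inner_comm, hDKval, Ks, Complex.real_smul, Efun, hK2]
  ring

/-- Pointwise value of the second-order operator `S² u` at `x ≠ 0`. -/
theorem lemD (P : V →L[ℝ] V) (br : V →ₗ[ℝ] V →ₗ[ℝ] W) (brc : V →L[ℝ] W) (S : V)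
    (hbrc : ∀ v, brc v = br S v) (m : ℕ) (σ : ℂ) (x : V × W) (hx : x ≠ 0) :
    vfV br S (vfV br S (fun y : V × W => ((⟪P y.1, P y.1⟫_ℝ : ℝ) : ℂ) ^ m * Ks σ y)) x
    = ((⟪P S, P S⟫_ℝ : ℝ) : ℂ) * (2*m*((⟪P x.1, P x.1⟫_ℝ : ℝ) : ℂ)^(m-1)*Ks σ x)
    + ((⟪P x.1, P S⟫_ℝ * ⟪P x.1, P S⟫_ℝ : ℝ) : ℂ)
        * (4*m*((m-1:ℕ):ℂ)*((⟪P x.1, P x.1⟫_ℝ : ℝ) : ℂ)^(m-1-1)*Ks σ x)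
    + ((⟪P x.1, P S⟫_ℝ * ⟪x.1, S⟫_ℝ : ℝ) : ℂ)
        * (16*m*σ*((⟪x.1, x.1⟫_ℝ : ℝ) : ℂ)*((⟪P x.1, P x.1⟫_ℝ : ℝ) : ℂ)^(m-1)*Ks (σ-1) x)
    + ((⟪x.1, S⟫_ℝ * ⟪x.1, S⟫_ℝ : ℝ) : ℂ)
        * (8*σ*Ks (σ-1) x*((⟪P x.1, P x.1⟫_ℝ : ℝ) : ℂ)^m
           + 16*σ*(σ-1)*((⟪x.1, x.1⟫_ℝ : ℝ) : ℂ)*((⟪x.1, x.1⟫_ℝ : ℝ) : ℂ)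
              *Ks (σ-2) x*((⟪P x.1, P x.1⟫_ℝ : ℝ) : ℂ)^m)
    + ((⟪S, S⟫_ℝ : ℝ) : ℂ)
        * (4*((⟪x.1, x.1⟫_ℝ : ℝ) : ℂ)*σ*Ks (σ-1) x*((⟪P x.1, P x.1⟫_ℝ : ℝ) : ℂ)^m)
    + ((⟪P x.1, P S⟫_ℝ * ⟪x.2, br S x.1⟫_ℝ : ℝ) : ℂ)
        * (-(4*m*σ*((⟪P x.1, P x.1⟫_ℝ : ℝ) : ℂ)^(m-1)*Ks (σ-1) x))
    + ((⟪x.1, S⟫_ℝ * ⟪x.2, br S x.1⟫_ℝ : ℝ) : ℂ)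
        * (-(8*((⟪x.1, x.1⟫_ℝ : ℝ) : ℂ)*σ*(σ-1)*Ks (σ-2) x*((⟪P x.1, P x.1⟫_ℝ : ℝ) : ℂ)^m))
    + ((⟪x.2, br S x.1⟫_ℝ * ⟪x.2, br S x.1⟫_ℝ : ℝ) : ℂ)
        * (σ*(σ-1)*Ks (σ-2) x*((⟪P x.1, P x.1⟫_ℝ : ℝ) : ℂ)^m)
    + ((⟪br S x.1, br S x.1⟫_ℝ : ℝ) : ℂ)
        * ((1/2)*σ*Ks (σ-1) x*((⟪P x.1, P x.1⟫_ℝ : ℝ) : ℂ)^m)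
    + ((⟪x.2, br S S⟫_ℝ : ℝ) : ℂ)
        * (-(σ*Ks (σ-1) x*((⟪P x.1, P x.1⟫_ℝ : ℝ) : ℂ)^m)) := by
  have hx0 : 0 < Kfun x := Kfun_pos hx
  have hev : vfV br S (fun y : V × W => ((⟪P y.1, P y.1⟫_ℝ : ℝ) : ℂ) ^ m * Ks σ y)
      =ᶠ[nhds x] Efun P brc m σ S := by
    have hop : ∀ᶠ y in nhds x, y ≠ (0 : V × W) := eventually_ne_nhds hx
    filter_upwards [hop] with y hy
    exact lemB P br brc S hbrc m σ y (Kfun_pos hy)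
  obtain ⟨D, hD, hval⟩ := lemC P brc S m σ x hx0
  have hfd : fderiv ℝ
      (vfV br S (fun y : V × W => ((⟪P y.1, P y.1⟫_ℝ : ℝ) : ℂ) ^ m * Ks σ y)) x = D := by
    rw [hev.fderiv_eq]; exact hD.fderiv
  rw [show vfV br S (vfV br S
        (fun y : V × W => ((⟪P y.1, P y.1⟫_ℝ : ℝ) : ℂ) ^ m * Ks σ y)) x
      = fderiv ℝ (vfV br S
          (fun y : V × W => ((⟪P y.1, P y.1⟫_ℝ : ℝ) : ℂ) ^ m * Ks σ y)) x (S, 0)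
        - (1/2 : ℂ) * fderiv ℝ (vfV br S
          (fun y : V × W => ((⟪P y.1, P y.1⟫_ℝ : ℝ) : ℂ) ^ m * Ks σ y)) x (0, br S x.1)
      from rfl]
  rw [hfd, hval S 0, hval 0 (br S x.1)]
  have h1 : brc x.1 = br S x.1 := hbrc x.1
  have h2 : brc S = br S S := hbrc S
  rw [← h1, ← h2]
  simp only [inner_zero_right, inner_zero_left, map_zero]
  push_cast
  ring

end Aux

theorem cardfilter (p p₁ : ℕ) (h : p₁ ≤ p) :
    (Finset.univ.filter fun j : Fin p => p₁ ≤ (j : ℕ)).card = p - p₁ := by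
  rcases Nat.lt_or_ge p₁ p with hlt | hge
  · have he : (Finset.univ.filter fun j : Fin p => p₁ ≤ (j : ℕ))
        = Finset.Ici (⟨p₁, hlt⟩ : Fin p) := by
      ext j; simp [Fin.le_def]
    rw [he, Fin.card_Ici]
  · have hpp : p₁ = p := le_antisymm h hge
    subst hpp
    have he : (Finset.univ.filter fun j : Fin p₁ => p₁ ≤ (j : ℕ)) = ∅ := by
      ext j; simpa using j.isLt
    simp [he]

/-- `((4s+2ρ-2)Δ₂ - (4m+p₂)Δ)(|X₂|^{2m} K_{s-m})
= 8(s-m)(4s+2ρ-2)(2s+q-2m-1)|X₂|^{2m+2} K_{s-m-1}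
+ 2m(2m+p₂-2)(4s+2ρ₁-4m-2)|X₂|^{2m-2} K_{s-m}` on `(𝔳 × 𝔷) ∖ {(0,0)}`,
for integers `m ≥ 1`. -/
theorem combDeltaX2mKs {V W : Type*} [NormedAddCommGroup V] [InnerProductSpace ℝ V]
    [NormedAddCommGroup W] [InnerProductSpace ℝ W]
    [FiniteDimensional ℝ V] [FiniteDimensional ℝ W]
    (p p₁ p₂ q : ℕ) (hp : Module.finrank ℝ V = p) (hq : Module.finrank ℝ W = q)
    (V₁ : Submodule ℝ V) (hp₁ : Module.finrank ℝ V₁ = p₁)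
    (hp₂ : Module.finrank ℝ V₁ᗮ = p₂)
    (br : V →ₗ[ℝ] V →ₗ[ℝ] W) (hbr : ∀ X : V, br X X = 0)
    (hbr12 : ∀ X ∈ V₁, ∀ Y ∈ V₁ᗮ, br X Y = 0)
    (J : W →ₗ[ℝ] V →ₗ[ℝ] V)
    (hJ : ∀ (z : W) (X Y : V), ⟪J z X, Y⟫_ℝ = ⟪z, br X Y⟫_ℝ)
    (hH : ∀ (z : W) (X : V), J z (J z X) = (-16 * ‖z‖^2) • X)
    (S : OrthonormalBasis (Fin p) ℝ V)
    (hS : ∀ j : Fin p, ((j : ℕ) < p₁ → S j ∈ V₁) ∧ (p₁ ≤ (j : ℕ) → S j ∈ V₁ᗮ))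
    (T : OrthonormalBasis (Fin q) ℝ W)
    (s : ℂ) (m : ℕ) (hm : 1 ≤ m) :
    ∀ x : V × W, x ≠ 0 →
      (4*s + 2*(rhoC p q) - 2)
            * subLap br (Finset.univ.filter fun j : Fin p => p₁ ≤ (j : ℕ)) (fun j => S j)
                (fun y => (‖projPerp V₁ y.1‖ : ℂ)^(2*m) * Ks (s - m) y) x
          - (4*(m : ℂ) + (p₂ : ℂ))
            * subLap br Finset.univ (fun j => S j)
                (fun y => (‖projPerp V₁ y.1‖ : ℂ)^(2*m) * Ks (s - m) y) x
        = 8*(s - (m : ℂ))*(4*s + 2*(rhoC p q) - 2)*(2*s + (q : ℂ) - 2*(m : ℂ) - 1)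
              * (‖projPerp V₁ x.1‖ : ℂ)^(2*m + 2) * Ks (s - m - 1) x
          + 2*(m : ℂ)*(2*(m : ℂ) + (p₂ : ℂ) - 2)*(4*s + 2*(rho1C p₁ q) - 4*(m : ℂ) - 2)
              * (‖projPerp V₁ x.1‖ : ℂ)^(2*m - 2) * Ks (s - m) x := by
  intro x hx
  set P : V →L[ℝ] V := V₁ᗮ.subtypeL.comp V₁ᗮ.orthogonalProjectionOnto with hPdef
  have hPapp : ∀ v : V, P v = ((V₁ᗮ.orthogonalProjectionOnto v : V₁ᗮ) : V) := fun v => rfl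
  have hproj : ∀ v : V, projPerp V₁ v = P v := fun v => rfl
  have hPsym : ∀ u v : V, ⟪P u, v⟫_ℝ = ⟪u, P v⟫_ℝ := fun u v =>
    Submodule.inner_starProjection_left_eq_right V₁ᗮ u v
  have hPmem : ∀ v : V, P v ∈ V₁ᗮ := fun v => SetLike.coe_mem _
  have hPid : ∀ v ∈ V₁ᗮ, P v = v := fun v hv =>
    Submodule.starProjection_eq_self_iff.mpr hv
  have hPidem : ∀ v : V, P (P v) = P v := fun v => hPid _ (hPmem v)
  have hPzero : ∀ v ∈ V₁ᗮᗮ, P v = 0 := fun v hv => by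
    rw [hPapp, Submodule.orthogonalProjectionOnto_apply_of_mem_orthogonal hv]
    rfl
  have hsub : ∀ v : V, v - P v ∈ V₁ᗮᗮ := fun v => Submodule.sub_starProjection_mem_orthogonal (K := V₁ᗮ) v
  have hV11 : V₁ᗮᗮ = V₁ := V₁.orthogonal_orthogonal
  have hmem1 : ∀ v ∈ V₁, v ∈ V₁ᗮᗮ := fun v hv => hV11.symm ▸ hv
  have horth : ∀ u ∈ V₁ᗮ, ∀ v ∈ V₁ᗮᗮ, ⟪u, v⟫_ℝ = 0 := fun u hu v hv =>
    (Submodule.mem_orthogonal V₁ᗮ v).mp hv u hu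
  have hbr_anti : ∀ u v : V, br u v = - br v u := by
    intro u v
    have h := hbr (u + v)
    simp only [map_add, LinearMap.add_apply, hbr u, hbr v, zero_add, add_zero] at h
    rw [add_comm] at h
    exact eq_neg_of_add_eq_zero_left h
  have hskew : ∀ (zz : W) (u v : V), ⟪J zz u, v⟫_ℝ = -⟪J zz v, u⟫_ℝ := by
    intro zz u v
    rw [hJ, hJ, hbr_anti v u, inner_neg_right, neg_neg]
  have hJJ : ∀ (zz : W) (u v : V), ⟪J zz u, J zz v⟫_ℝ = 16*‖zz‖^2*⟪u, v⟫_ℝ := by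
    intro zz u v
    rw [hskew zz u (J zz v), hH, real_inner_smul_left, real_inner_comm v u]
    ring
  have hJmem2 : ∀ (zz : W), ∀ u ∈ V₁ᗮ, J zz u ∈ V₁ᗮ := by
    intro zz u hu
    rw [Submodule.mem_orthogonal]
    intro y hy
    rw [real_inner_comm, hJ, hbr_anti u y, hbr12 y hy u hu, neg_zero, inner_zero_right]
  have hJmem1 : ∀ (zz : W), ∀ u ∈ V₁, J zz u ∈ V₁ᗮᗮ := by
    intro zz u hu
    rw [Submodule.mem_orthogonal]
    intro y hy
    rw [real_inner_comm, hJ, hbr12 u hu y hy, inner_zero_right]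
  have hPJ : ∀ (zz : W) (u : V), P (J zz u) = J zz (P u) := by
    intro zz u
    have hdecomp : J zz u = J zz (P u) + J zz (u - P u) := by
      rw [← map_add]; congr 1; abel
    rw [hdecomp, map_add, hPid _ (hJmem2 zz _ (hPmem u)),
        hPzero _ (hJmem1 zz _ (hV11 ▸ hsub u)), add_zero]
  have hbx : ⟪P x.1, x.1⟫_ℝ = ⟪P x.1, P x.1⟫_ℝ := by
    conv_lhs => rw [← hPidem x.1]
    rw [hPsym]
  have hO1 : ⟪P x.1, J x.2 x.1⟫_ℝ = 0 := by
    have hdecomp : J x.2 x.1 = J x.2 (P x.1) + J x.2 (x.1 - P x.1) := by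
      rw [← map_add]; congr 1; abel
    rw [hdecomp, inner_add_right]
    have ha : ⟪P x.1, J x.2 (P x.1)⟫_ℝ = 0 := by
      rw [real_inner_comm, hJ, hbr, inner_zero_right]
    have hb2 : ⟪P x.1, J x.2 (x.1 - P x.1)⟫_ℝ = 0 :=
      horth _ (hPmem x.1) _ (hJmem1 x.2 _ (hV11 ▸ hsub x.1))
    rw [ha, hb2, add_zero]
  have hO2 : ⟪x.1, J x.2 x.1⟫_ℝ = 0 := by
    rw [real_inner_comm, hJ, hbr, inner_zero_right]
  have hsumS : ∀ u v : V, (∑ j : Fin p, ⟪u, S j⟫_ℝ * ⟪v, S j⟫_ℝ) = ⟪u, v⟫_ℝ := by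
    intro u v
    rw [← S.sum_inner_mul_inner u v]
    exact Finset.sum_congr rfl fun k _ => by rw [real_inner_comm (S k) v]
  have hsumT : ∀ u v : W, (∑ k : Fin q, ⟪u, T k⟫_ℝ * ⟪v, T k⟫_ℝ) = ⟪u, v⟫_ℝ := by
    intro u v
    rw [← T.sum_inner_mul_inner u v]
    exact Finset.sum_congr rfl fun k _ => by rw [real_inner_comm (T k) v]
  have hsumF : ∀ u v : V,
      (∑ j ∈ Finset.univ.filter fun j : Fin p => p₁ ≤ (j : ℕ),
        ⟪u, S j⟫_ℝ * ⟪v, S j⟫_ℝ) = ⟪P u, v⟫_ℝ := by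
    intro u v
    have hstep : ∀ j ∈ Finset.univ.filter fun j : Fin p => p₁ ≤ (j : ℕ),
        ⟪u, S j⟫_ℝ * ⟪v, S j⟫_ℝ = ⟪P u, S j⟫_ℝ * ⟪P v, S j⟫_ℝ := by
      intro j hj
      have hjmem : S j ∈ V₁ᗮ := (hS j).2 (Finset.mem_filter.mp hj).2
      have key : ∀ u' : V, ⟪u', S j⟫_ℝ = ⟪P u', S j⟫_ℝ := by
        intro u'
        have h0 : ⟪u' - P u', S j⟫_ℝ = 0 := by
          rw [real_inner_comm]; exact horth _ hjmem _ (hsub u')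
        rw [inner_sub_left] at h0
        linarith
      rw [key u, key v]
    rw [Finset.sum_congr rfl hstep]
    rw [Finset.sum_subset (Finset.filter_subset _ _)]
    · rw [hsumS (P u) (P v), ← hPsym (P u) v, hPidem]
    · intro j _ hnj
      have hjlt : (j : ℕ) < p₁ := by
        by_contra hcon
        exact hnj (Finset.mem_filter.mpr ⟨Finset.mem_univ j, le_of_not_gt hcon⟩)
      have hz : ⟪P u, S j⟫_ℝ = 0 := horth _ (hPmem u) _ (hmem1 _ ((hS j).1 hjlt))
      rw [hz, zero_mul]
  have hple : p₁ ≤ p := by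
    rw [← hp, ← hp₁]
    exact V₁.finrank_le
  have hp12 : p₁ + p₂ = p := by
    rw [← hp, ← hp₁, ← hp₂]
    exact Submodule.finrank_add_finrank_orthogonal V₁
  have hcardF : (Finset.univ.filter fun j : Fin p => p₁ ≤ (j : ℕ)).card = p₂ := by
    rw [cardfilter p p₁ hple]; omega
  have hueq : (fun y : V × W => (‖projPerp V₁ y.1‖ : ℂ)^(2*m) * Ks (s - (m:ℂ)) y)
      = fun y : V × W => ((⟪P y.1, P y.1⟫_ℝ : ℝ) : ℂ) ^ m * Ks (s - (m:ℂ)) y := by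
    funext y
    congr 1
    rw [hproj, real_inner_self_eq_norm_sq, Complex.ofReal_pow, pow_mul]
  have hG : ∀ j : Fin p,
      vfV br (S j) (vfV br (S j)
        (fun y : V × W => ((⟪P y.1, P y.1⟫_ℝ : ℝ) : ℂ) ^ m * Ks (s - (m:ℂ)) y)) x
      = (((if p₁ ≤ (j:ℕ) then (1:ℝ) else 0) : ℝ) : ℂ) * (2*(m:ℂ)*((⟪P x.1, P x.1⟫_ℝ : ℝ) : ℂ)^(m-1)*Ks (s - (m:ℂ)) x)
      + ((⟪P x.1, S j⟫_ℝ * ⟪P x.1, S j⟫_ℝ : ℝ) : ℂ) * (4*(m:ℂ)*((m-1:ℕ):ℂ)*((⟪P x.1, P x.1⟫_ℝ : ℝ) : ℂ)^(m-1-1)*Ks (s - (m:ℂ)) x)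
      + ((⟪P x.1, S j⟫_ℝ * ⟪x.1, S j⟫_ℝ : ℝ) : ℂ) * (16*(m:ℂ)*(s - (m:ℂ))*((⟪x.1, x.1⟫_ℝ : ℝ) : ℂ)*((⟪P x.1, P x.1⟫_ℝ : ℝ) : ℂ)^(m-1)*Ks (s - (m:ℂ) - 1) x)
      + ((⟪x.1, S j⟫_ℝ * ⟪x.1, S j⟫_ℝ : ℝ) : ℂ) * (8*(s - (m:ℂ))*Ks (s - (m:ℂ) - 1) x*((⟪P x.1, P x.1⟫_ℝ : ℝ) : ℂ)^m + 16*(s - (m:ℂ))*((s - (m:ℂ))-1)*((⟪x.1, x.1⟫_ℝ : ℝ) : ℂ)*((⟪x.1, x.1⟫_ℝ : ℝ) : ℂ)*Ks (s - (m:ℂ) - 2) x*((⟪P x.1, P x.1⟫_ℝ : ℝ) : ℂ)^m)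
      + (4*((⟪x.1, x.1⟫_ℝ : ℝ) : ℂ)*(s - (m:ℂ))*Ks (s - (m:ℂ) - 1) x*((⟪P x.1, P x.1⟫_ℝ : ℝ) : ℂ)^m)
      + ((⟪P x.1, S j⟫_ℝ * ⟪J x.2 x.1, S j⟫_ℝ : ℝ) : ℂ) * (4*(m:ℂ)*(s - (m:ℂ))*((⟪P x.1, P x.1⟫_ℝ : ℝ) : ℂ)^(m-1)*Ks (s - (m:ℂ) - 1) x)
      + ((⟪x.1, S j⟫_ℝ * ⟪J x.2 x.1, S j⟫_ℝ : ℝ) : ℂ) * (8*((⟪x.1, x.1⟫_ℝ : ℝ) : ℂ)*(s - (m:ℂ))*((s - (m:ℂ))-1)*Ks (s - (m:ℂ) - 2) x*((⟪P x.1, P x.1⟫_ℝ : ℝ) : ℂ)^m)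
      + ((⟪J x.2 x.1, S j⟫_ℝ * ⟪J x.2 x.1, S j⟫_ℝ : ℝ) : ℂ) * ((s - (m:ℂ))*((s - (m:ℂ))-1)*Ks (s - (m:ℂ) - 2) x*((⟪P x.1, P x.1⟫_ℝ : ℝ) : ℂ)^m)
      + (((∑ k : Fin q, ⟪J (T k) x.1, S j⟫_ℝ * ⟪J (T k) x.1, S j⟫_ℝ) : ℝ) : ℂ) * ((1/2)*(s - (m:ℂ))*Ks (s - (m:ℂ) - 1) x*((⟪P x.1, P x.1⟫_ℝ : ℝ) : ℂ)^m) := by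
    intro j
    rw [lemD P br (LinearMap.toContinuousLinearMap (br (S j))) (S j)
      (fun v => by simp) m (s - (m:ℂ)) x hx]
    have e1 : ⟪P x.1, P (S j)⟫_ℝ = ⟪P x.1, S j⟫_ℝ := by
      rw [← hPsym (P x.1) (S j), hPidem]
    have e2 : ⟪P (S j), P (S j)⟫_ℝ = (if p₁ ≤ (j:ℕ) then (1:ℝ) else 0) := by
      by_cases hj : p₁ ≤ (j:ℕ)
      · rw [hPid _ ((hS j).2 hj), if_pos hj, real_inner_self_eq_norm_sq, S.orthonormal.1 j]
        norm_num
      · rw [hPzero _ (hmem1 _ ((hS j).1 (lt_of_not_ge hj))), if_neg hj, inner_zero_left]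
    have e3 : ⟪S j, S j⟫_ℝ = 1 := by
      rw [real_inner_self_eq_norm_sq, S.orthonormal.1 j]; norm_num
    have e4 : ⟪x.2, br (S j) x.1⟫_ℝ = -⟪J x.2 x.1, S j⟫_ℝ := by
      rw [← hJ x.2 (S j) x.1, hskew]
    have e5 : ⟪x.2, br (S j) (S j)⟫_ℝ = 0 := by rw [hbr, inner_zero_right]
    have e6 : ⟪br (S j) x.1, br (S j) x.1⟫_ℝ
        = ∑ k : Fin q, ⟪J (T k) x.1, S j⟫_ℝ * ⟪J (T k) x.1, S j⟫_ℝ := by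
      rw [← hsumT (br (S j) x.1) (br (S j) x.1)]
      refine Finset.sum_congr rfl fun k _ => ?_
      have hterm : ⟪br (S j) x.1, T k⟫_ℝ = -⟪J (T k) x.1, S j⟫_ℝ := by
        rw [real_inner_comm, ← hJ (T k) (S j) x.1, hskew]
      rw [hterm]; ring
    rw [e1, e2, e3, e4, e5, e6]
    push_cast
    ring
  have h9U : (∑ j : Fin p, ∑ k : Fin q, ⟪J (T k) x.1, S j⟫_ℝ * ⟪J (T k) x.1, S j⟫_ℝ)
      = 16 * (q:ℝ) * ⟪x.1, x.1⟫_ℝ := by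
    rw [Finset.sum_comm]
    have hval : ∀ k : Fin q, (∑ j : Fin p, ⟪J (T k) x.1, S j⟫_ℝ * ⟪J (T k) x.1, S j⟫_ℝ)
        = 16 * ⟪x.1, x.1⟫_ℝ := by
      intro k
      rw [hsumS (J (T k) x.1) (J (T k) x.1), hJJ, T.orthonormal.1 k]
      norm_num
    rw [Finset.sum_congr rfl fun k _ => hval k, Finset.sum_const, Finset.card_univ,
      Fintype.card_fin, nsmul_eq_mul]
    ring
  have h9F : (∑ j ∈ Finset.univ.filter fun j : Fin p => p₁ ≤ (j : ℕ),
        ∑ k : Fin q, ⟪J (T k) x.1, S j⟫_ℝ * ⟪J (T k) x.1, S j⟫_ℝ)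
      = 16 * (q:ℝ) * ⟪P x.1, P x.1⟫_ℝ := by
    rw [Finset.sum_comm]
    have hval : ∀ k : Fin q,
        (∑ j ∈ Finset.univ.filter fun j : Fin p => p₁ ≤ (j : ℕ),
          ⟪J (T k) x.1, S j⟫_ℝ * ⟪J (T k) x.1, S j⟫_ℝ) = 16 * ⟪P x.1, P x.1⟫_ℝ := by
      intro k
      rw [hsumF (J (T k) x.1) (J (T k) x.1), hPJ, hJJ, T.orthonormal.1 k, ← hbx]
      norm_num
    rw [Finset.sum_congr rfl fun k _ => hval k, Finset.sum_const, Finset.card_univ,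
      Fintype.card_fin, nsmul_eq_mul]
    ring
  have hiU : (∑ j : Fin p, (if p₁ ≤ (j:ℕ) then (1:ℝ) else 0)) = (p₂:ℝ) := by
    rw [Finset.sum_boole, hcardF]
  have hiF : (∑ j ∈ Finset.univ.filter fun j : Fin p => p₁ ≤ (j : ℕ),
      (if p₁ ≤ (j:ℕ) then (1:ℝ) else 0)) = (p₂:ℝ) := by
    rw [Finset.sum_congr rfl (fun j hj => if_pos (Finset.mem_filter.mp hj).2),
      Finset.sum_const, hcardF, nsmul_eq_mul, mul_one]
  have hLapU : subLap br Finset.univ (fun j => S j)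
      (fun y : V × W => (‖projPerp V₁ y.1‖ : ℂ)^(2*m) * Ks (s - (m:ℂ)) y) x
      = ((p₂:ℕ):ℂ) * (2*(m:ℂ)*((⟪P x.1, P x.1⟫_ℝ : ℝ) : ℂ)^(m-1)*Ks (s - (m:ℂ)) x) + ((⟪P x.1, P x.1⟫_ℝ : ℝ) : ℂ) * (4*(m:ℂ)*((m-1:ℕ):ℂ)*((⟪P x.1, P x.1⟫_ℝ : ℝ) : ℂ)^(m-1-1)*Ks (s - (m:ℂ)) x) + ((⟪P x.1, P x.1⟫_ℝ : ℝ) : ℂ) * (16*(m:ℂ)*(s - (m:ℂ))*((⟪x.1, x.1⟫_ℝ : ℝ) : ℂ)*((⟪P x.1, P x.1⟫_ℝ : ℝ) : ℂ)^(m-1)*Ks (s - (m:ℂ) - 1) x) + ((⟪x.1, x.1⟫_ℝ : ℝ) : ℂ) * (8*(s - (m:ℂ))*Ks (s - (m:ℂ) - 1) x*((⟪P x.1, P x.1⟫_ℝ : ℝ) : ℂ)^m + 16*(s - (m:ℂ))*((s - (m:ℂ))-1)*((⟪x.1, x.1⟫_ℝ : ℝ) : ℂ)*((⟪x.1, x.1⟫_ℝ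 : ℝ) : ℂ)*Ks (s - (m:ℂ) - 2) x*((⟪P x.1, P x.1⟫_ℝ : ℝ) : ℂ)^m)
      + ((p:ℕ):ℂ) * (4*((⟪x.1, x.1⟫_ℝ : ℝ) : ℂ)*(s - (m:ℂ))*Ks (s - (m:ℂ) - 1) x*((⟪P x.1, P x.1⟫_ℝ : ℝ) : ℂ)^m) + (16*((‖x.2‖^2 : ℝ) : ℂ)*((⟪x.1, x.1⟫_ℝ : ℝ) : ℂ)) * ((s - (m:ℂ))*((s - (m:ℂ))-1)*Ks (s - (m:ℂ) - 2) x*((⟪P x.1, P x.1⟫_ℝ : ℝ) : ℂ)^m) + (16*(q:ℂ)*((⟪x.1, x.1⟫_ℝ : ℝ) : ℂ)) * ((1/2)*(s - (m:ℂ))*Ks (s - (m:ℂ) - 1) x*((⟪P x.1, P x.1⟫_ℝ : ℝ) : ℂ)^m) := by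
    rw [show subLap br Finset.univ (fun j => S j)
        (fun y : V × W => (‖projPerp V₁ y.1‖ : ℂ)^(2*m) * Ks (s - (m:ℂ)) y) x
      = ∑ j : Fin p, vfV br (S j) (vfV br (S j)
          (fun y : V × W => (‖projPerp V₁ y.1‖ : ℂ)^(2*m) * Ks (s - (m:ℂ)) y)) x from rfl]
    rw [hueq]
    rw [Finset.sum_congr rfl fun j _ => hG j]
    simp only [Finset.sum_add_distrib, ← Finset.sum_mul, ← Complex.ofReal_sum]
    rw [hiU, h9U, hsumS (P x.1) (P x.1), hsumS (P x.1) x.1, hsumS x.1 x.1,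
      hsumS (P x.1) (J x.2 x.1), hsumS x.1 (J x.2 x.1), hsumS (J x.2 x.1) (J x.2 x.1),
      hJJ, hbx, hO1, hO2, Finset.sum_const, Finset.card_univ, Fintype.card_fin, nsmul_eq_mul]
    push_cast
    ring
  have hLapF : subLap br (Finset.univ.filter fun j : Fin p => p₁ ≤ (j : ℕ)) (fun j => S j)
      (fun y : V × W => (‖projPerp V₁ y.1‖ : ℂ)^(2*m) * Ks (s - (m:ℂ)) y) x
      = ((p₂:ℕ):ℂ) * (2*(m:ℂ)*((⟪P x.1, P x.1⟫_ℝ : ℝ) : ℂ)^(m-1)*Ks (s - (m:ℂ)) x) + ((⟪P x.1, P x.1⟫_ℝ : ℝ) : ℂ) * (4*(m:ℂ)*((m-1:ℕ):ℂ)*((⟪P x.1, P x.1⟫_ℝ : ℝ) : ℂ)^(m-1-1)*Ks (s - (m:ℂ)) x) + ((⟪P x.1, P x.1⟫_ℝ : ℝ) : ℂ) * (16*(m:ℂ)*(s - (m:ℂ))*((⟪x.1, x.1⟫_ℝ : ℝ) : ℂ)*((⟪P x.1, P x.1⟫_ℝ : ℝ) : ℂ)^(m-1)*Ks (s - (m:ℂ)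 - 1) x) + ((⟪P x.1, P x.1⟫_ℝ : ℝ) : ℂ) * (8*(s - (m:ℂ))*Ks (s - (m:ℂ) - 1) x*((⟪P x.1, P x.1⟫_ℝ : ℝ) : ℂ)^m + 16*(s - (m:ℂ))*((s - (m:ℂ))-1)*((⟪x.1, x.1⟫_ℝ : ℝ) : ℂ)*((⟪x.1, x.1⟫_ℝ : ℝ) : ℂ)*Ks (s - (m:ℂ) - 2) x*((⟪P x.1, P x.1⟫_ℝ : ℝ) : ℂ)^m)
      + ((p₂:ℕ):ℂ) * (4*((⟪x.1, x.1⟫_ℝ : ℝ) : ℂ)*(s - (m:ℂ))*Ks (s - (m:ℂ) - 1) x*((⟪P x.1, P x.1⟫_ℝ : ℝ) : ℂ)^m) + (16*((‖x.2‖^2 : ℝ) : ℂ)*((⟪P x.1, P x.1⟫_ℝ : ℝ) : ℂ)) * ((s - (m:ℂ))*((s - (m:ℂ))-1)*Ks (s - (m:ℂ) - 2) x*((⟪P x.1, P x.1⟫_ℝ : ℝ) : ℂ)^m) + (16*(q:ℂ)*((⟪P x.1, P x.1⟫_ℝ : ℝ) : ℂ)) * ((1/2)*(s - (m:ℂ))*Ks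 (s - (m:ℂ) - 1) x*((⟪P x.1, P x.1⟫_ℝ : ℝ) : ℂ)^m) := by
    rw [show subLap br (Finset.univ.filter fun j : Fin p => p₁ ≤ (j : ℕ)) (fun j => S j)
        (fun y : V × W => (‖projPerp V₁ y.1‖ : ℂ)^(2*m) * Ks (s - (m:ℂ)) y) x
      = ∑ j ∈ Finset.univ.filter fun j : Fin p => p₁ ≤ (j : ℕ),
          vfV br (S j) (vfV br (S j)
          (fun y : V × W => (‖projPerp V₁ y.1‖ : ℂ)^(2*m) * Ks (s - (m:ℂ)) y)) x from rfl]
    rw [hueq]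
    rw [Finset.sum_congr rfl fun j _ => hG j]
    simp only [Finset.sum_add_distrib, ← Finset.sum_mul, ← Complex.ofReal_sum]
    rw [hiF, h9F, hsumF (P x.1) (P x.1), hsumF (P x.1) x.1, hsumF x.1 x.1,
      hsumF (P x.1) (J x.2 x.1), hsumF x.1 (J x.2 x.1), hsumF (J x.2 x.1) (J x.2 x.1)]
    simp only [hPidem, hPJ, hJJ, hbx, hO1]
    rw [Finset.sum_const, hcardF, nsmul_eq_mul]
    push_cast
    ring
  -- final algebra
  rw [hLapF, hLapU, hproj]
  have hBnorm : ((‖P x.1‖ : ℝ) : ℂ)^2 = ((⟪P x.1, P x.1⟫_ℝ : ℝ) : ℂ) := by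
    rw [real_inner_self_eq_norm_sq]
    push_cast
    ring
  have hpow1 : ((‖P x.1‖ : ℝ) : ℂ)^(2*m+2)
      = ((⟪P x.1, P x.1⟫_ℝ : ℝ) : ℂ)^(m-1) * ((⟪P x.1, P x.1⟫_ℝ : ℝ) : ℂ)
        * ((⟪P x.1, P x.1⟫_ℝ : ℝ) : ℂ) := by
    rw [show 2*m+2 = 2*(m+1) by ring, pow_mul, hBnorm,
      show m+1 = (m-1)+2 by omega, pow_add]
    ring
  have hpow2 : ((‖P x.1‖ : ℝ) : ℂ)^(2*m-2) = ((⟪P x.1, P x.1⟫_ℝ : ℝ) : ℂ)^(m-1) := by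
    rw [show 2*m-2 = 2*(m-1) by omega, pow_mul, hBnorm]
  have hpow3 : ((⟪P x.1, P x.1⟫_ℝ : ℝ) : ℂ)^m
      = ((⟪P x.1, P x.1⟫_ℝ : ℝ) : ℂ)^(m-1) * ((⟪P x.1, P x.1⟫_ℝ : ℝ) : ℂ) := by
    rw [← pow_succ]
    congr 1
    omega
  have hKne : ((Kfun x : ℝ) : ℂ) ≠ 0 := by
    exact_mod_cast (Kfun_pos hx).ne'
  have hKval : ((Kfun x : ℝ) : ℂ)
      = ((⟪x.1, x.1⟫_ℝ : ℝ) : ℂ) * ((⟪x.1, x.1⟫_ℝ : ℝ) : ℂ) + ((‖x.2‖^2 : ℝ) : ℂ) := by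
    have h0 : Kfun x = ⟪x.1, x.1⟫_ℝ * ⟪x.1, x.1⟫_ℝ + ‖x.2‖^2 := by
      simp only [Kfun, real_inner_self_eq_norm_sq]
      ring
    rw [h0]
    push_cast
    ring
  have hKrel1 : Ks (s - (m:ℂ)) x = Ks (s - (m:ℂ) - 1) x * ((Kfun x : ℝ) : ℂ) := by
    have e : s - (m:ℂ) = (s - (m:ℂ) - 1) + 1 := by ring
    conv_lhs => rw [e]
    simp only [Ks]
    rw [Complex.cpow_add _ _ hKne, Complex.cpow_one]
  have hKrel2 : Ks (s - (m:ℂ) - 1) x = Ks (s - (m:ℂ) - 2) x * ((Kfun x : ℝ) : ℂ) := by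
    have e : s - (m:ℂ) - 1 = (s - (m:ℂ) - 2) + 1 := by ring
    conv_lhs => rw [e]
    simp only [Ks]
    rw [Complex.cpow_add _ _ hKne, Complex.cpow_one]
  have hpc : ((p:ℕ):ℂ) = ((p₁:ℕ):ℂ) + ((p₂:ℕ):ℂ) := by
    rw [← hp12]
    push_cast
    ring
  have keyB : ((m:ℂ)-1) * ((⟪P x.1, P x.1⟫_ℝ : ℝ) : ℂ)^(m-1-1) * ((⟪P x.1, P x.1⟫_ℝ : ℝ) : ℂ)
      = ((m:ℂ)-1) * ((⟪P x.1, P x.1⟫_ℝ : ℝ) : ℂ)^(m-1) := by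
    rcases eq_or_lt_of_le hm with h1 | h2
    · rw [← h1]
      norm_num
    · rw [mul_assoc, ← pow_succ]
      congr 2
      omega
  simp only [rhoC, rho1C]
  rw [hpow1, hpow2, hpow3, hKrel1, hKrel2, hKval, hpc, Nat.cast_sub hm, Nat.cast_one]
  linear_combination ((4*s + 2*((((p₁:ℕ):ℂ) + ((p₂:ℕ):ℂ)) + 2*(q:ℂ))/2 - 2)
      - (4*(m:ℂ) + ((p₂:ℕ):ℂ)))
    * (4*(m:ℂ) * (Ks (s - (m:ℂ) - 2) x
        * (((⟪x.1, x.1⟫_ℝ : ℝ) : ℂ) * ((⟪x.1, x.1⟫_ℝ : ℝ) : ℂ) + ((‖x.2‖^2 : ℝ) : ℂ))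
        * (((⟪x.1, x.1⟫_ℝ : ℝ) : ℂ) * ((⟪x.1, x.1⟫_ℝ : ℝ) : ℂ) + ((‖x.2‖^2 : ℝ) : ℂ)))) * keyB
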